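/- Let L, M, N be positive integers and let g_0, …, g_{L−1} and h_0, …, h_{L−1} be real-valued elements of ℓ²(ℤ²,ℍ). Then the following are equivalent: (1) the Gabor systems G(g,L,M,N) and G(h,L,M,N) are dual, i.e. for all finitely supported f, φ : ℤ×ℤ → ℍ, ∑_{l=0}^{L−1} ∑_{n∈ℤ²} ∑_{m∈{0,…,M−1}²} ⟨f, E_{m/M}T_{nN}g_l⟩·⟨E_{m/M}T_{nN}h_l, φ⟩ = ⟨f, φ⟩; (2) for every k ∈ {0,…,N−1}² and every p ∈ ℤ², ∑_{l=0}^{L−1} ∑_{n∈ℤ²} g_l(k−nN)·h_l(k+pM−nN) = (1/M²) if p = (0,0) and = 0 otherwise, where nN := (n₁N,n₂N) and pM := (p₁M,p₂M). -/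

import Mathlib

noncomputable section

open scoped Real

/-- The real quaternions. -/
abbrev ℍ : Type := Quaternion ℝ

/-- `e_i θ = cos θ + (sin θ) i`. -/
def eI (θ : ℝ) : ℍ := ⟨Real.cos θ, Real.sin θ, 0, 0⟩

/-- `e_j θ = cos θ + (sin θ) j`. -/
def eJ (θ : ℝ) : ℍ := ⟨Real.cos θ, 0, Real.sin θ, 0⟩

/-- Quaternionic pairing `⟨f,g⟩ = ∑ conj (f k) * g k`. -/
def qpair (f g : ℤ × ℤ → ℍ) : ℍ := ∑' k : ℤ × ℤ, star (f k) * g k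

/-- Membership in `ℓ²(ℤ², ℍ)`. -/
def MemL2 (f : ℤ × ℤ → ℍ) : Prop := Summable fun k : ℤ × ℤ => ‖f k‖ ^ 2

/-- `‖f‖² = ∑ |f k|²`. -/
def normSq2 (f : ℤ × ℤ → ℍ) : ℝ := ∑' k : ℤ × ℤ, ‖f k‖ ^ 2

/-- A window is real-valued if all its values lie in `ℝ ⊆ ℍ`. -/
def IsRealValued (f : ℤ × ℤ → ℍ) : Prop := ∀ k : ℤ × ℤ, f k = ((f k).re : ℍ)

/-- The Gabor atom `E_{m/M} T_{nN} w`. -/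
def gaborAtom (M N : ℕ) (w : ℤ × ℤ → ℍ) (m : ℕ × ℕ) (n : ℤ × ℤ) : ℤ × ℤ → ℍ :=
  fun k =>
    eI (2 * π * (m.1 : ℝ) * (k.1 : ℝ) / (M : ℝ)) *
      w (k.1 - n.1 * (N : ℤ), k.2 - n.2 * (N : ℤ)) *
      eJ (2 * π * (m.2 : ℝ) * (k.2 : ℝ) / (M : ℝ))

/-- The index square `{0, …, M-1}²`. -/
abbrev msq (M : ℕ) : Finset (ℕ × ℕ) := Finset.range M ×ˢ Finset.range M

/-- `k ∈ {0, …, N-1}²` inside `ℤ²`. -/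
def InNsq (N : ℕ) (k : ℤ × ℤ) : Prop :=
  0 ≤ k.1 ∧ k.1 < (N : ℤ) ∧ 0 ≤ k.2 ∧ k.2 < (N : ℤ)

/-- `∑_{l<L} ∑_{n∈ℤ²} ∑_{m∈{0,…,M-1}²} |⟨E_{m/M}T_{nN}g_l, h⟩|²`. -/
def frameSum (L M N : ℕ) (g : ℕ → ℤ × ℤ → ℍ) (h : ℤ × ℤ → ℍ) : ℝ :=
  ∑ l ∈ Finset.range L, ∑' n : ℤ × ℤ, ∑ m ∈ msq M,
    ‖qpair (gaborAtom M N (g l) m n) h‖ ^ 2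

/-- Bessel system with bound `B`. -/
def IsBessel (L M N : ℕ) (g : ℕ → ℤ × ℤ → ℍ) (B : ℝ) : Prop :=
  ∀ h : ℤ × ℤ → ℍ, MemL2 h → frameSum L M N g h ≤ B * normSq2 h

/-- Frame with bounds `A ≤ B`. -/
def IsFrame (L M N : ℕ) (g : ℕ → ℤ × ℤ → ℍ) (A B : ℝ) : Prop :=
  ∀ h : ℤ × ℤ → ℍ, MemL2 h →
    A * normSq2 h ≤ frameSum L M N g h ∧ frameSum L M N g h ≤ B * normSq2 h

/-- Parseval frame. -/
def IsParseval (L M N : ℕ) (g : ℕ → ℤ × ℤ → ℍ) : Prop :=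
  ∀ h : ℤ × ℤ → ℍ, MemL2 h → frameSum L M N g h = normSq2 h

/-- Orthonormal system. -/
def IsON (L M N : ℕ) (g : ℕ → ℤ × ℤ → ℍ) : Prop :=
  ∀ l l' : ℕ, l < L → l' < L → ∀ m ∈ msq M, ∀ m' ∈ msq M, ∀ n n' : ℤ × ℤ,
    qpair (gaborAtom M N (g l) m n) (gaborAtom M N (g l') m' n') =
      if l = l' ∧ m = m' ∧ n = n' then 1 else 0

/-- `G(k,p) = ∑_{l<L} ∑_{n∈ℤ²} g_l(k-nN) g_l(k+pM-nN)`. -/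
def gaborG (L M N : ℕ) (g : ℕ → ℤ × ℤ → ℍ) (k p : ℤ × ℤ) : ℍ :=
  ∑ l ∈ Finset.range L, ∑' n : ℤ × ℤ,
    g l (k.1 - n.1 * (N : ℤ), k.2 - n.2 * (N : ℤ)) *
      g l (k.1 + p.1 * (M : ℤ) - n.1 * (N : ℤ), k.2 + p.2 * (M : ℤ) - n.2 * (N : ℤ))

/-- Mixed version: `∑_{l<L} ∑_{n∈ℤ²} g_l(k-nN) h_l(k+pM-nN)`. -/
def gaborGmix (L M N : ℕ) (g h : ℕ → ℤ × ℤ → ℍ) (k p : ℤ × ℤ) : ℍ :=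
  ∑ l ∈ Finset.range L, ∑' n : ℤ × ℤ,
    g l (k.1 - n.1 * (N : ℤ), k.2 - n.2 * (N : ℤ)) *
      h l (k.1 + p.1 * (M : ℤ) - n.1 * (N : ℤ), k.2 + p.2 * (M : ℤ) - n.2 * (N : ℤ))

/-- `∑_{l<L} ∑_{n∈ℤ²} |g_l(k-nN)|²`. -/
def winSum (L N : ℕ) (g : ℕ → ℤ × ℤ → ℍ) (k : ℤ × ℤ) : ℝ :=
  ∑ l ∈ Finset.range L, ∑' n : ℤ × ℤ,
    ‖g l (k.1 - n.1 * (N : ℤ), k.2 - n.2 * (N : ℤ))‖ ^ 2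

/-- Support of diameter `< M` in every row and every column. -/
def DiamLt (M : ℕ) (f : ℤ × ℤ → ℍ) : Prop :=
  (∀ k₂ k₁ k₁' : ℤ, f (k₁, k₂) ≠ 0 → f (k₁', k₂) ≠ 0 → |k₁ - k₁'| < (M : ℤ)) ∧
  (∀ k₁ k₂ k₂' : ℤ, f (k₁, k₂) ≠ 0 → f (k₁, k₂') ≠ 0 → |k₂ - k₂'| < (M : ℤ))

/-- `M`-periodicity. -/
def MPeriodic (M : ℕ) (f : ℤ × ℤ → ℍ) : Prop :=
  ∀ k : ℤ × ℤ, f (k.1 + (M : ℤ), k.2) = f k ∧ f (k.1, k.2 + (M : ℤ)) = f k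

/-- Duality of two Gabor systems (on finitely supported sequences). -/
def AreDual (L M N : ℕ) (g h : ℕ → ℤ × ℤ → ℍ) : Prop :=
  ∀ f φ : ℤ × ℤ → ℍ, (Function.support f).Finite → (Function.support φ).Finite →
    (∑ l ∈ Finset.range L, ∑' n : ℤ × ℤ, ∑ m ∈ msq M,
      qpair f (gaborAtom M N (g l) m n) * qpair (gaborAtom M N (h l) m n) φ)
      = qpair f φ

-- ### auxiliary quaternion lemmas

lemma eI_mul (a b : ℝ) : eI a * eI b = eI (a+b) := by
  ext <;> simp only [Quaternion.re_mul, Quaternion.imI_mul, Quaternion.imJ_mul,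
    Quaternion.imK_mul] <;> simp only [eI] <;>
  norm_num [Real.cos_add, Real.sin_add] <;>
  ring_nf

lemma eJ_mul (a b : ℝ) : eJ a * eJ b = eJ (a+b) := by
  ext <;> simp only [Quaternion.re_mul, Quaternion.imI_mul, Quaternion.imJ_mul,
    Quaternion.imK_mul] <;> simp only [eJ] <;>
  norm_num [Real.cos_add, Real.sin_add] <;>
  ring_nf

lemma star_eI (θ : ℝ) : star (eI θ) = eI (-θ) := by ext <;> simp <;> simp [eI]

lemma star_eJ (θ : ℝ) : star (eJ θ) = eJ (-θ) := by ext <;> simp <;> simp [eJ]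

lemma norm_eI (θ : ℝ) : ‖eI θ‖ = 1 := by
  have h : Quaternion.normSq (eI θ) = 1 := by
    rw [Quaternion.normSq_def']; simp [eI, Real.sin_sq_add_cos_sq]
  have := Quaternion.normSq_eq_norm_mul_self (eI θ)
  nlinarith [norm_nonneg (eI θ)]

lemma norm_eJ (θ : ℝ) : ‖eJ θ‖ = 1 := by
  have h : Quaternion.normSq (eJ θ) = 1 := by
    rw [Quaternion.normSq_def']; simp [eJ, Real.sin_sq_add_cos_sq]
  have := Quaternion.normSq_eq_norm_mul_self (eJ θ)
  nlinarith [norm_nonneg (eJ θ)]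

def iQ : ℍ := ⟨0,1,0,0⟩
def jQ : ℍ := ⟨0,0,1,0⟩

-- ### character sums

lemma charSumC (M : ℕ) (hM : 0 < M) (d : ℤ) :
    ∑ m ∈ Finset.range M, Complex.exp (((2*π*(m:ℝ)*(d:ℝ)/(M:ℝ) : ℝ) : ℂ) * Complex.I)
      = if (M:ℤ) ∣ d then (M:ℂ) else 0 := by
  have hMR : (M:ℝ) ≠ 0 := by positivity
  set z : ℂ := Complex.exp (((2*π*(d:ℝ)/(M:ℝ) : ℝ) : ℂ) * Complex.I) with hz
  have hpow : ∀ m : ℕ, Complex.exp (((2*π*(m:ℝ)*(d:ℝ)/(M:ℝ) : ℝ) : ℂ) * Complex.I) = z ^ m := by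
    intro m
    rw [hz, ← Complex.exp_nat_mul]
    congr 1
    push_cast
    field_simp
  rw [Finset.sum_congr rfl fun m _ => hpow m]
  have hzone : z = 1 ↔ (M:ℤ) ∣ d := by
    rw [hz, Complex.exp_eq_one_iff]
    constructor
    · rintro ⟨n, hn⟩
      have h2 : (2*π*(d:ℝ)/(M:ℝ) : ℝ) = n * (2*π) := by
        have := congrArg Complex.im hn
        simpa using this
      have hd : (d:ℝ) = n * M := by
        field_simp at h2
        nlinarith [Real.pi_pos]
      refine ⟨n, ?_⟩
      have : d = n * (M:ℤ) := by exact_mod_cast hd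
      rw [this]; ring
    · rintro ⟨n, rfl⟩
      have hMC : (M:ℂ) ≠ 0 := by exact_mod_cast hMR
      exact ⟨n, by push_cast; field_simp⟩
  by_cases hdvd : (M:ℤ) ∣ d
  · rw [if_pos hdvd]
    have : z = 1 := hzone.mpr hdvd
    simp [this]
  · rw [if_neg hdvd]
    have hz1 : z ≠ 1 := fun h => hdvd (hzone.mp h)
    have hzM : z ^ M = 1 := by
      rw [hz, ← Complex.exp_nat_mul]
      have hMC : (M:ℂ) ≠ 0 := by exact_mod_cast hMR
      have : (M:ℂ) * (((2*π*(d:ℝ)/(M:ℝ) : ℝ) : ℂ) * Complex.I) = (d:ℂ) * (2 * π * Complex.I) := by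
        push_cast
        field_simp
      rw [this]
      exact Complex.exp_int_mul_two_pi_mul_I d
    rw [geom_sum_eq hz1, hzM]
    simp

lemma cosSum (M : ℕ) (hM : 0 < M) (d : ℤ) :
    ∑ m ∈ Finset.range M, Real.cos (2*π*(m:ℝ)*(d:ℝ)/(M:ℝ)) = if (M:ℤ) ∣ d then (M:ℝ) else 0 := by
  have := congrArg Complex.re (charSumC M hM d)
  rw [Complex.re_sum] at this
  simp only [Complex.exp_ofReal_mul_I_re] at this
  convert this using 1
  split <;> simp

lemma sinSum (M : ℕ) (hM : 0 < M) (d : ℤ) :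
    ∑ m ∈ Finset.range M, Real.sin (2*π*(m:ℝ)*(d:ℝ)/(M:ℝ)) = 0 := by
  have := congrArg Complex.im (charSumC M hM d)
  rw [Complex.im_sum] at this
  simp only [Complex.exp_ofReal_mul_I_im] at this
  convert this using 1
  split <;> simp

lemma qcoe_sum {s : Finset ℕ} (f : ℕ → ℝ) :
    ((∑ m ∈ s, f m : ℝ) : ℍ) = ∑ m ∈ s, ((f m : ℝ) : ℍ) :=
  map_sum (algebraMap ℝ ℍ) f s

lemma sumEI (M : ℕ) (hM : 0 < M) (d : ℤ) :
    ∑ m ∈ Finset.range M, eI (2*π*(m:ℝ)*(d:ℝ)/(M:ℝ)) = if (M:ℤ) ∣ d then ((M:ℝ) : ℍ) else 0 := by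
  have : ∀ m : ℕ, eI (2*π*(m:ℝ)*(d:ℝ)/(M:ℝ))
      = ((Real.cos (2*π*(m:ℝ)*(d:ℝ)/(M:ℝ)) : ℝ) : ℍ)
        + ((Real.sin (2*π*(m:ℝ)*(d:ℝ)/(M:ℝ)) : ℝ) : ℍ) * iQ := by
    intro m; ext <;> simp <;> simp [eI, iQ]
  rw [Finset.sum_congr rfl fun m _ => this m, Finset.sum_add_distrib, ← Finset.sum_mul,
    ← qcoe_sum, ← qcoe_sum, cosSum M hM d, sinSum M hM d]
  split <;> simp

lemma sumEJ (M : ℕ) (hM : 0 < M) (d : ℤ) :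
    ∑ m ∈ Finset.range M, eJ (2*π*(m:ℝ)*(d:ℝ)/(M:ℝ)) = if (M:ℤ) ∣ d then ((M:ℝ) : ℍ) else 0 := by
  have : ∀ m : ℕ, eJ (2*π*(m:ℝ)*(d:ℝ)/(M:ℝ))
      = ((Real.cos (2*π*(m:ℝ)*(d:ℝ)/(M:ℝ)) : ℝ) : ℍ)
        + ((Real.sin (2*π*(m:ℝ)*(d:ℝ)/(M:ℝ)) : ℝ) : ℍ) * jQ := by
    intro m; ext <;> simp <;> simp [eJ, jQ]
  rw [Finset.sum_congr rfl fun m _ => this m, Finset.sum_add_distrib, ← Finset.sum_mul,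
    ← qcoe_sum, ← qcoe_sum, cosSum M hM d, sinSum M hM d]
  split <;> simp

lemma Ssum (M : ℕ) (hM : 0 < M) (a1 b1 c2 : ℤ) :
    ∑ m ∈ msq M, eI (2*π*(m.1:ℝ)*(a1:ℝ)/(M:ℝ)) * eJ (2*π*(m.2:ℝ)*(c2:ℝ)/(M:ℝ))
        * eI (-(2*π*(m.1:ℝ)*(b1:ℝ)/(M:ℝ)))
      = if (M:ℤ) ∣ (a1 - b1) ∧ (M:ℤ) ∣ c2 then (((M:ℝ)^2 : ℝ) : ℍ) else 0 := by
  rw [Finset.sum_product]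
  have step1 : ∀ m1 ∈ Finset.range M,
      ∑ m2 ∈ Finset.range M, eI (2*π*(m1:ℝ)*(a1:ℝ)/(M:ℝ)) * eJ (2*π*(m2:ℝ)*(c2:ℝ)/(M:ℝ))
          * eI (-(2*π*(m1:ℝ)*(b1:ℝ)/(M:ℝ)))
      = (if (M:ℤ) ∣ c2 then ((M:ℝ) : ℍ) else 0) * eI (2*π*(m1:ℝ)*((a1:ℝ)-(b1:ℝ))/(M:ℝ)) := by
    intro m1 _
    rw [← Finset.sum_mul, ← Finset.mul_sum, sumEJ M hM c2]
    split
    · rw [Quaternion.mul_coe_eq_smul, smul_mul_assoc, eI_mul, Quaternion.coe_mul_eq_smul]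
      congr 2
      field_simp
      ring
    · simp
  rw [Finset.sum_congr rfl step1, ← Finset.mul_sum]
  have : ∀ m1 : ℕ, eI (2*π*(m1:ℝ)*((a1:ℝ)-(b1:ℝ))/(M:ℝ))
      = eI (2*π*(m1:ℝ)*(((a1-b1 : ℤ)):ℝ)/(M:ℝ)) := by
    intro m1; congr 1; push_cast; ring
  rw [Finset.sum_congr rfl fun m1 _ => this m1, sumEI M hM (a1-b1)]
  by_cases h1 : (M:ℤ) ∣ (a1 - b1) <;> by_cases h2 : (M:ℤ) ∣ c2 <;>
    simp [h1, h2, pow_two, Quaternion.coe_mul]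

-- ### atom product

lemma atomProd (M N : ℕ) (g h : ℤ × ℤ → ℍ) (hg : IsRealValued g) (hh : IsRealValued h)
    (m : ℕ × ℕ) (n a b : ℤ × ℤ) :
    gaborAtom M N g m n a * star (gaborAtom M N h m n b)
      = (g (a.1 - n.1 * (N:ℤ), a.2 - n.2 * (N:ℤ)) * h (b.1 - n.1 * (N:ℤ), b.2 - n.2 * (N:ℤ))) *
        (eI (2*π*(m.1:ℝ)*(a.1:ℝ)/(M:ℝ)) * eJ (2*π*(m.2:ℝ)*(((a.2-b.2 : ℤ)):ℝ)/(M:ℝ))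
          * eI (-(2*π*(m.1:ℝ)*(b.1:ℝ)/(M:ℝ)))) := by
  unfold gaborAtom
  rw [star_mul, star_mul, star_eI, star_eJ]
  rw [hg (a.1 - n.1 * (N:ℤ), a.2 - n.2 * (N:ℤ)), hh (b.1 - n.1 * (N:ℤ), b.2 - n.2 * (N:ℤ))]
  rw [Quaternion.star_coe]
  have hJ : eJ (2*π*(m.2:ℝ)*(a.2:ℝ)/(M:ℝ)) * eJ (-(2*π*(m.2:ℝ)*(b.2:ℝ)/(M:ℝ)))
      = eJ (2*π*(m.2:ℝ)*(((a.2-b.2 : ℤ)):ℝ)/(M:ℝ)) := by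
    rw [eJ_mul]
    congr 1
    push_cast
    ring
  simp only [Quaternion.coe_mul_eq_smul, Quaternion.mul_coe_eq_smul, smul_mul_assoc,
    mul_smul_comm, smul_smul]
  congr 1
  rw [mul_assoc, ← mul_assoc (eJ (2 * π * (m.2:ℝ) * (a.2:ℝ) / (M:ℝ))), hJ, ← mul_assoc]

-- ### summability

lemma inj_shift (N : ℕ) (hN : 0 < N) (a : ℤ × ℤ) :
    Function.Injective (fun n : ℤ × ℤ => (a.1 - n.1 * (N:ℤ), a.2 - n.2 * (N:ℤ))) := by
  intro n n' hE
  have hN' : (N:ℤ) ≠ 0 := by exact_mod_cast hN.ne'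
  rw [Prod.ext_iff] at hE
  obtain ⟨h1, h2⟩ := hE
  simp only at h1 h2
  have e1 : n.1 * (N:ℤ) = n'.1 * (N:ℤ) := by omega
  have e2 : n.2 * (N:ℤ) = n'.2 * (N:ℤ) := by omega
  exact Prod.ext (mul_right_cancel₀ hN' e1) (mul_right_cancel₀ hN' e2)

lemma summable_sq_shift (N : ℕ) (hN : 0 < N) (g : ℤ × ℤ → ℍ) (hg : MemL2 g) (a : ℤ × ℤ) :
    Summable (fun n : ℤ × ℤ => ‖g (a.1 - n.1 * (N:ℤ), a.2 - n.2 * (N:ℤ))‖ ^ 2) :=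
  hg.comp_injective (inj_shift N hN a)

lemma summable_gh (N : ℕ) (hN : 0 < N) (g h : ℤ × ℤ → ℍ) (hg : MemL2 g) (hh : MemL2 h)
    (a b : ℤ × ℤ) :
    Summable (fun n : ℤ × ℤ =>
      g (a.1 - n.1 * (N:ℤ), a.2 - n.2 * (N:ℤ)) * h (b.1 - n.1 * (N:ℤ), b.2 - n.2 * (N:ℤ))) := by
  have h1 := summable_sq_shift N hN g hg a
  have h2 := summable_sq_shift N hN h hh b
  apply Summable.of_norm
  apply Summable.of_nonneg_of_le (fun n => norm_nonneg _) _ ((h1.add h2).div_const 2)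
  intro n
  rw [norm_mul]
  nlinarith [sq_nonneg (‖g (a.1 - n.1 * (N:ℤ), a.2 - n.2 * (N:ℤ))‖
      - ‖h (b.1 - n.1 * (N:ℤ), b.2 - n.2 * (N:ℤ))‖),
    norm_nonneg (g (a.1 - n.1 * (N:ℤ), a.2 - n.2 * (N:ℤ))),
    norm_nonneg (h (b.1 - n.1 * (N:ℤ), b.2 - n.2 * (N:ℤ)))]

-- ### the kernel

def GG (L N : ℕ) (g h : ℕ → ℤ × ℤ → ℍ) (a b : ℤ × ℤ) : ℍ :=
  ∑ l ∈ Finset.range L, ∑' n : ℤ × ℤ,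
    g l (a.1 - n.1 * (N:ℤ), a.2 - n.2 * (N:ℤ)) * h l (b.1 - n.1 * (N:ℤ), b.2 - n.2 * (N:ℤ))

def Scst (M : ℕ) (a b : ℤ × ℤ) : ℍ :=
  if (M:ℤ) ∣ (a.1 - b.1) ∧ (M:ℤ) ∣ (a.2 - b.2) then (((M:ℝ)^2 : ℝ) : ℍ) else 0

lemma msum_atom (M N : ℕ) (hM : 0 < M) (g h : ℤ × ℤ → ℍ) (hg : IsRealValued g)
    (hh : IsRealValued h) (n a b : ℤ × ℤ) :
    ∑ m ∈ msq M, gaborAtom M N g m n a * star (gaborAtom M N h m n b)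
      = (g (a.1 - n.1 * (N:ℤ), a.2 - n.2 * (N:ℤ)) * h (b.1 - n.1 * (N:ℤ), b.2 - n.2 * (N:ℤ)))
        * Scst M a b := by
  rw [Finset.sum_congr rfl fun m _ => atomProd M N g h hg hh m n a b, ← Finset.mul_sum,
    Ssum M hM a.1 b.1 (a.2 - b.2)]
  rfl

lemma nsum_atom (M N : ℕ) (hM : 0 < M) (g h : ℤ × ℤ → ℍ) (hg : IsRealValued g)
    (hh : IsRealValued h) (a b : ℤ × ℤ) :
    ∑' n : ℤ × ℤ, ∑ m ∈ msq M, gaborAtom M N g m n a * star (gaborAtom M N h m n b)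
      = (∑' n : ℤ × ℤ, g (a.1 - n.1 * (N:ℤ), a.2 - n.2 * (N:ℤ))
          * h (b.1 - n.1 * (N:ℤ), b.2 - n.2 * (N:ℤ))) * Scst M a b := by
  rw [tsum_congr fun n => msum_atom M N hM g h hg hh n a b]
  exact tsum_mul_right

lemma kernel_eq (L M N : ℕ) (hM : 0 < M) (g h : ℕ → ℤ × ℤ → ℍ)
    (hgreal : ∀ l < L, IsRealValued (g l)) (hhreal : ∀ l < L, IsRealValued (h l))
    (a b : ℤ × ℤ) :
    ∑ l ∈ Finset.range L, ∑' n : ℤ × ℤ, ∑ m ∈ msq M,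
        gaborAtom M N (g l) m n a * star (gaborAtom M N (h l) m n b)
      = GG L N g h a b * Scst M a b := by
  rw [Finset.sum_congr rfl fun l hl =>
    nsum_atom M N hM (g l) (h l) (hgreal l (Finset.mem_range.mp hl))
      (hhreal l (Finset.mem_range.mp hl)) a b]
  rw [GG, ← Finset.sum_mul]

-- ### delta sequences

def dlt (a : ℤ × ℤ) : ℤ × ℤ → ℍ := fun k => if k = a then 1 else 0

lemma dlt_supp (a : ℤ × ℤ) : (Function.support (dlt a)).Finite := by
  apply Set.Finite.subset (Set.finite_singleton a)
  intro x hx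
  rw [Function.mem_support] at hx
  by_contra hxa
  simp only [Set.mem_singleton_iff] at hxa
  exact hx (if_neg hxa)

lemma qpair_dlt_left (a : ℤ × ℤ) (w : ℤ × ℤ → ℍ) : qpair (dlt a) w = w a := by
  unfold qpair
  rw [tsum_eq_single a]
  · simp [dlt]
  · intro b hb
    simp [dlt, hb]

lemma qpair_dlt_right (b : ℤ × ℤ) (w : ℤ × ℤ → ℍ) : qpair w (dlt b) = star (w b) := by
  unfold qpair
  rw [tsum_eq_single b]
  · simp [dlt]
  · intro k hk
    simp [dlt, hk]

lemma qpair_dlt_dlt (a b : ℤ × ℤ) : qpair (dlt a) (dlt b) = if a = b then 1 else 0 := by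
  rw [qpair_dlt_left]
  simp [dlt]

-- ### shift invariance of GG

lemma GG_shift (L N : ℕ) (g h : ℕ → ℤ × ℤ → ℍ) (a b q : ℤ × ℤ) :
    GG L N g h (a.1 + q.1 * (N:ℤ), a.2 + q.2 * (N:ℤ)) (b.1 + q.1 * (N:ℤ), b.2 + q.2 * (N:ℤ))
      = GG L N g h a b := by
  unfold GG
  refine Finset.sum_congr rfl fun l _ => ?_
  rw [← (Equiv.addRight q).tsum_eq]
  refine tsum_congr fun n => ?_
  simp only [Equiv.coe_addRight, Prod.fst_add, Prod.snd_add]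
  ring_nf

-- ### gmix vs GG

lemma gmix_eq (L M N : ℕ) (g h : ℕ → ℤ × ℤ → ℍ) (k p : ℤ × ℤ) :
    gaborGmix L M N g h k p
      = GG L N g h k (k.1 + p.1 * (M : ℤ), k.2 + p.2 * (M : ℤ)) := rfl

lemma qcoe_M_sq (M : ℕ) : (((M:ℝ)^2 : ℝ) : ℍ) = ((M:ℍ))^2 := by
  push_cast
  ring

-- ### KC from condition

lemma KC_of_cond (L M N : ℕ) (hM : 0 < M) (hN : 0 < N) (g h : ℕ → ℤ × ℤ → ℍ)
    (hcond : ∀ k : ℤ × ℤ, InNsq N k → ∀ p : ℤ × ℤ,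
      gaborGmix L M N g h k p = if p = 0 then (((M : ℍ)) ^ 2)⁻¹ else 0)
    (a b : ℤ × ℤ) :
    GG L N g h a b * Scst M a b = if a = b then 1 else 0 := by
  have hMZ : (M:ℤ) ≠ 0 := by exact_mod_cast hM.ne'
  have hNZ : (0:ℤ) < (N:ℤ) := by exact_mod_cast hN
  by_cases hdvd : (M:ℤ) ∣ (a.1 - b.1) ∧ (M:ℤ) ∣ (a.2 - b.2)
  · obtain ⟨⟨c1, hc1⟩, ⟨c2, hc2⟩⟩ := hdvd
    set p : ℤ × ℤ := (-c1, -c2) with hp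
    set k : ℤ × ℤ := (a.1 % (N:ℤ), a.2 % (N:ℤ)) with hkdef
    set q : ℤ × ℤ := (a.1 / (N:ℤ), a.2 / (N:ℤ)) with hqdef
    have hk : InNsq N k := ⟨Int.emod_nonneg _ (by exact_mod_cast hN.ne'),
      Int.emod_lt_of_pos _ hNZ, Int.emod_nonneg _ (by exact_mod_cast hN.ne'),
      Int.emod_lt_of_pos _ hNZ⟩
    have ha : a = (k.1 + q.1 * (N:ℤ), k.2 + q.2 * (N:ℤ)) := by
      have h1 := Int.emod_add_ediv_mul a.1 (N:ℤ)
      have h2 := Int.emod_add_ediv_mul a.2 (N:ℤ)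
      exact Prod.ext (by simp [hkdef, hqdef]; linarith) (by simp [hkdef, hqdef]; linarith)
    have hb : b = ((k.1 + p.1 * (M:ℤ)) + q.1 * (N:ℤ), (k.2 + p.2 * (M:ℤ)) + q.2 * (N:ℤ)) := by
      have e1 : p.1 * (M:ℤ) = -(((M:ℤ)) * c1) := by simp [hp]; ring
      have e2 : p.2 * (M:ℤ) = -(((M:ℤ)) * c2) := by simp [hp]; ring
      have ha1 := congrArg Prod.fst ha
      have ha2 := congrArg Prod.snd ha
      simp only at ha1 ha2
      exact Prod.ext (by simp only; linarith) (by simp only; linarith)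
    have hGG : GG L N g h a b = GG L N g h k (k.1 + p.1 * (M:ℤ), k.2 + p.2 * (M:ℤ)) := by
      rw [ha, hb]
      exact GG_shift L N g h k (k.1 + p.1 * (M:ℤ), k.2 + p.2 * (M:ℤ)) q
    have hScst : Scst M a b = (((M:ℝ)^2 : ℝ) : ℍ) := by
      rw [Scst, if_pos ⟨⟨c1, hc1⟩, ⟨c2, hc2⟩⟩]
    rw [hGG, hScst, ← gmix_eq, hcond k hk p]
    by_cases hp0 : p = 0
    · have hab : a = b := by
        have : c1 = 0 ∧ c2 = 0 := by
          rw [hp, Prod.ext_iff] at hp0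
          simp at hp0
          exact ⟨hp0.1, hp0.2⟩
        refine Prod.ext ?_ ?_
        · have h1 := hc1; rw [this.1] at h1; omega
        · have h2 := hc2; rw [this.2] at h2; omega
      rw [if_pos hp0, if_pos hab, qcoe_M_sq]
      have hMH : ((M:ℍ)) ≠ 0 := by
        intro hE
        have hE' : ((M:ℝ) : ℍ) = ((0:ℝ) : ℍ) := by push_cast; simpa using hE
        have h0 : (M:ℝ) = 0 := Quaternion.coe_injective hE'
        have h1 : (M:ℝ) ≠ 0 := by positivity
        exact h1 h0
      exact inv_mul_cancel₀ (pow_ne_zero 2 hMH)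
    · have hab : a ≠ b := by
        intro hE
        apply hp0
        have h1 : (M:ℤ) * c1 = 0 := by rw [← hc1, hE]; ring
        have h2 : (M:ℤ) * c2 = 0 := by rw [← hc2, hE]; ring
        have hc10 : c1 = 0 := by
          rcases mul_eq_zero.mp h1 with h' | h'
          · exact absurd h' hMZ
          · exact h'
        have hc20 : c2 = 0 := by
          rcases mul_eq_zero.mp h2 with h' | h'
          · exact absurd h' hMZ
          · exact h'
        rw [hp, hc10, hc20]
        simp
      rw [if_neg hp0, if_neg hab, zero_mul]
  · have hab : a ≠ b := by
      intro hE
      exact hdvd (by rw [hE]; simp)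
    rw [Scst, if_neg hdvd, mul_zero, if_neg hab]

-- ### from duality to the condition

lemma cond_of_dual (L M N : ℕ) (hM : 0 < M) (g h : ℕ → ℤ × ℤ → ℍ)
    (hgreal : ∀ l < L, IsRealValued (g l)) (hhreal : ∀ l < L, IsRealValued (h l))
    (hdual : AreDual L M N g h) :
    ∀ k : ℤ × ℤ, InNsq N k → ∀ p : ℤ × ℤ,
      gaborGmix L M N g h k p = if p = 0 then (((M : ℍ)) ^ 2)⁻¹ else 0 := by
  intro k _ p
  set b : ℤ × ℤ := (k.1 + p.1 * (M:ℤ), k.2 + p.2 * (M:ℤ)) with hbdef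
  have hd := hdual (dlt k) (dlt b) (dlt_supp k) (dlt_supp b)
  rw [qpair_dlt_dlt] at hd
  have hL : (∑ l ∈ Finset.range L, ∑' n : ℤ × ℤ, ∑ m ∈ msq M,
        qpair (dlt k) (gaborAtom M N (g l) m n) * qpair (gaborAtom M N (h l) m n) (dlt b))
      = ∑ l ∈ Finset.range L, ∑' n : ℤ × ℤ, ∑ m ∈ msq M,
        gaborAtom M N (g l) m n k * star (gaborAtom M N (h l) m n b) := by
    refine Finset.sum_congr rfl fun l _ => ?_
    refine tsum_congr fun n => ?_
    refine Finset.sum_congr rfl fun m _ => ?_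
    rw [qpair_dlt_left, qpair_dlt_right]
  rw [hL, kernel_eq L M N hM g h hgreal hhreal k b] at hd
  have hdvd : (M:ℤ) ∣ (k.1 - b.1) ∧ (M:ℤ) ∣ (k.2 - b.2) :=
    ⟨⟨-p.1, by rw [hbdef]; ring⟩, ⟨-p.2, by rw [hbdef]; ring⟩⟩
  rw [Scst, if_pos hdvd] at hd
  have hMH : ((M:ℍ)) ≠ 0 := by
    intro hE
    have hE' : ((M:ℝ) : ℍ) = ((0:ℝ) : ℍ) := by push_cast; simpa using hE
    have h0 : (M:ℝ) = 0 := Quaternion.coe_injective hE'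
    have h1 : (M:ℝ) ≠ 0 := by positivity
    exact h1 h0
  have hC : (((M:ℝ)^2 : ℝ) : ℍ) ≠ 0 := by
    rw [qcoe_M_sq]
    exact pow_ne_zero 2 hMH
  have hgm : gaborGmix L M N g h k p = GG L N g h k b := gmix_eq L M N g h k p
  by_cases hp0 : p = 0
  · have hkb : k = b := by
      rw [hbdef, hp0]
      exact Prod.ext (by simp) (by simp)
    rw [if_pos hkb] at hd
    rw [if_pos hp0, hgm]
    have h2 : GG L N g h k b * (((M:ℝ)^2 : ℝ) : ℍ) * ((((M:ℝ)^2 : ℝ) : ℍ))⁻¹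
        = 1 * ((((M:ℝ)^2 : ℝ) : ℍ))⁻¹ := by rw [hd]
    rw [mul_inv_cancel_right₀ hC, one_mul] at h2
    rw [← qcoe_M_sq]
    exact h2
  · have hkb : k ≠ b := by
      intro hE
      apply hp0
      rw [hbdef, Prod.ext_iff] at hE
      simp only at hE
      have h1 : p.1 * (M:ℤ) = 0 := by omega
      have h2 : p.2 * (M:ℤ) = 0 := by omega
      have hMZ : (M:ℤ) ≠ 0 := by exact_mod_cast hM.ne'
      have hp1 : p.1 = 0 := by
        rcases mul_eq_zero.mp h1 with h' | h'
        · exact h'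
        · exact absurd h' hMZ
      have hp2 : p.2 = 0 := by
        rcases mul_eq_zero.mp h2 with h' | h'
        · exact h'
        · exact absurd h' hMZ
      exact Prod.ext hp1 hp2
    rw [if_neg hkb] at hd
    rw [if_neg hp0, hgm]
    rcases mul_eq_zero.mp hd with h' | h'
    · exact h'
    · exact absurd h' hC

-- ### from the condition to duality

lemma dual_of_KC (L M N : ℕ) (hM : 0 < M) (hN : 0 < N) (g h : ℕ → ℤ × ℤ → ℍ)
    (hg : ∀ l < L, MemL2 (g l)) (hh : ∀ l < L, MemL2 (h l))
    (hgreal : ∀ l < L, IsRealValued (g l)) (hhreal : ∀ l < L, IsRealValued (h l))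
    (KC : ∀ a b : ℤ × ℤ, GG L N g h a b * Scst M a b = if a = b then 1 else 0) :
    AreDual L M N g h := by
  intro f φ hf hφ
  classical
  set sf := hf.toFinset with hsf
  set sφ := hφ.toFinset with hsφ
  -- step A: pointwise expansion of the m-sum
  have hA : ∀ l ∈ Finset.range L, ∀ n : ℤ × ℤ,
      ∑ m ∈ msq M, qpair f (gaborAtom M N (g l) m n) * qpair (gaborAtom M N (h l) m n) φ
        = ∑ a ∈ sf, ∑ b ∈ sφ, star (f a) *
            ((g l (a.1 - n.1 * (N:ℤ), a.2 - n.2 * (N:ℤ))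
              * h l (b.1 - n.1 * (N:ℤ), b.2 - n.2 * (N:ℤ))) * Scst M a b) * φ b := by
    intro l hl n
    have hlL := Finset.mem_range.mp hl
    have hqf : ∀ m : ℕ × ℕ, qpair f (gaborAtom M N (g l) m n)
        = ∑ a ∈ sf, star (f a) * gaborAtom M N (g l) m n a := by
      intro m
      refine tsum_eq_sum fun a ha => ?_
      have : f a = 0 := by
        by_contra hfa
        exact ha (hf.mem_toFinset.mpr hfa)
      simp [this]
    have hqφ : ∀ m : ℕ × ℕ, qpair (gaborAtom M N (h l) m n) φ
        = ∑ b ∈ sφ, star (gaborAtom M N (h l) m n b) * φ b := by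
      intro m
      refine tsum_eq_sum fun b hb => ?_
      have : φ b = 0 := by
        by_contra hfb
        exact hb (hφ.mem_toFinset.mpr hfb)
      simp [this]
    calc ∑ m ∈ msq M, qpair f (gaborAtom M N (g l) m n) * qpair (gaborAtom M N (h l) m n) φ
        = ∑ m ∈ msq M, ∑ a ∈ sf, ∑ b ∈ sφ,
            (star (f a) * gaborAtom M N (g l) m n a)
              * (star (gaborAtom M N (h l) m n b) * φ b) := by
          refine Finset.sum_congr rfl fun m _ => ?_
          rw [hqf m, hqφ m, Finset.sum_mul_sum]
      _ = ∑ a ∈ sf, ∑ b ∈ sφ, ∑ m ∈ msq M,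
            (star (f a) * gaborAtom M N (g l) m n a)
              * (star (gaborAtom M N (h l) m n b) * φ b) := by
          rw [Finset.sum_comm]
          exact Finset.sum_congr rfl fun a _ => Finset.sum_comm
      _ = ∑ a ∈ sf, ∑ b ∈ sφ, star (f a) *
            ((g l (a.1 - n.1 * (N:ℤ), a.2 - n.2 * (N:ℤ))
              * h l (b.1 - n.1 * (N:ℤ), b.2 - n.2 * (N:ℤ))) * Scst M a b) * φ b := by
          refine Finset.sum_congr rfl fun a _ => Finset.sum_congr rfl fun b _ => ?_
          rw [← msum_atom M N hM (g l) (h l) (hgreal l hlL) (hhreal l hlL) n a b,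
            Finset.mul_sum, Finset.sum_mul]
          refine Finset.sum_congr rfl fun m _ => ?_
          simp only [mul_assoc]
  -- summability of individual terms
  have hsummand : ∀ l ∈ Finset.range L, ∀ a : ℤ × ℤ, ∀ b : ℤ × ℤ,
      Summable (fun n : ℤ × ℤ => star (f a) *
        ((g l (a.1 - n.1 * (N:ℤ), a.2 - n.2 * (N:ℤ))
          * h l (b.1 - n.1 * (N:ℤ), b.2 - n.2 * (N:ℤ))) * Scst M a b) * φ b) := by
    intro l hl a b
    have hlL := Finset.mem_range.mp hl
    exact (((summable_gh N hN (g l) (h l) (hg l hlL) (hh l hlL) a b).mul_right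
      (Scst M a b)).mul_left (star (f a))).mul_right (φ b)
  -- step B: put it together
  calc (∑ l ∈ Finset.range L, ∑' n : ℤ × ℤ, ∑ m ∈ msq M,
          qpair f (gaborAtom M N (g l) m n) * qpair (gaborAtom M N (h l) m n) φ)
      = ∑ l ∈ Finset.range L, ∑' n : ℤ × ℤ, ∑ a ∈ sf, ∑ b ∈ sφ, star (f a) *
            ((g l (a.1 - n.1 * (N:ℤ), a.2 - n.2 * (N:ℤ))
              * h l (b.1 - n.1 * (N:ℤ), b.2 - n.2 * (N:ℤ))) * Scst M a b) * φ b := by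
        exact Finset.sum_congr rfl fun l hl => tsum_congr fun n => hA l hl n
    _ = ∑ l ∈ Finset.range L, ∑ a ∈ sf, ∑ b ∈ sφ, ∑' n : ℤ × ℤ, star (f a) *
            ((g l (a.1 - n.1 * (N:ℤ), a.2 - n.2 * (N:ℤ))
              * h l (b.1 - n.1 * (N:ℤ), b.2 - n.2 * (N:ℤ))) * Scst M a b) * φ b := by
        refine Finset.sum_congr rfl fun l hl => ?_
        rw [Summable.tsum_finsetSum fun a _ => summable_sum fun b _ => hsummand l hl a b]
        exact Finset.sum_congr rfl fun a _ => Summable.tsum_finsetSum fun b _ => hsummand l hl a b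
    _ = ∑ l ∈ Finset.range L, ∑ a ∈ sf, ∑ b ∈ sφ, star (f a) *
            ((∑' n : ℤ × ℤ, g l (a.1 - n.1 * (N:ℤ), a.2 - n.2 * (N:ℤ))
              * h l (b.1 - n.1 * (N:ℤ), b.2 - n.2 * (N:ℤ))) * Scst M a b) * φ b := by
        refine Finset.sum_congr rfl fun l _ => Finset.sum_congr rfl fun a _ =>
          Finset.sum_congr rfl fun b _ => ?_
        rw [tsum_mul_right, tsum_mul_left, tsum_mul_right]
    _ = ∑ a ∈ sf, ∑ b ∈ sφ, star (f a) * (GG L N g h a b * Scst M a b) * φ b := by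
        rw [Finset.sum_comm]
        refine Finset.sum_congr rfl fun a _ => ?_
        rw [Finset.sum_comm]
        refine Finset.sum_congr rfl fun b _ => ?_
        rw [GG, ← Finset.sum_mul, ← Finset.mul_sum, ← Finset.sum_mul]
    _ = ∑ a ∈ sf, ∑ b ∈ sφ, star (f a) * (if a = b then (1:ℍ) else 0) * φ b := by
        refine Finset.sum_congr rfl fun a _ => Finset.sum_congr rfl fun b _ => ?_
        rw [KC a b]
    _ = ∑ a ∈ sf, star (f a) * φ a := by
        refine Finset.sum_congr rfl fun a _ => ?_
        rw [Finset.sum_congr rfl fun b _ => show star (f a) * (if a = b then (1:ℍ) else 0) * φ b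
            = if a = b then star (f a) * φ b else 0 by split <;> simp]
        rw [Finset.sum_ite_eq]
        split
        · rfl
        · next hb =>
            have : φ a = 0 := by
              by_contra hfa
              exact hb (hφ.mem_toFinset.mpr hfa)
            simp [this]
    _ = qpair f φ := by
        refine (tsum_eq_sum fun a ha => ?_).symm
        have : f a = 0 := by
          by_contra hfa
          exact ha (hf.mem_toFinset.mpr hfa)
        simp [this]

/-- characterization of dual Gabor frames with real-valued windows. -/
theorem stmt_17 (L M N : ℕ) (hL : 0 < L) (hM : 0 < M) (hN : 0 < N)
    (g h : ℕ → ℤ × ℤ → ℍ)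
    (hg : ∀ l < L, MemL2 (g l)) (hh : ∀ l < L, MemL2 (h l))
    (hgreal : ∀ l < L, IsRealValued (g l)) (hhreal : ∀ l < L, IsRealValued (h l)) :
    AreDual L M N g h ↔
      ∀ k : ℤ × ℤ, InNsq N k → ∀ p : ℤ × ℤ,
        gaborGmix L M N g h k p = if p = 0 then (((M : ℍ)) ^ 2)⁻¹ else 0 := by
  constructor
  · intro hdual
    exact cond_of_dual L M N hM g h hgreal hhreal hdual
  · intro hcond
    exact dual_of_KC L M N hM hN g h hg hh hgreal hhreal (KC_of_cond L M N hM hN g h hcond)
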